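/- Closed-form optimal schedule for power-type oracle costs (Corollary 3.7). Let N ∈ ℕ, δ̄ > 0, 0 ≤ m < 1 < M, r > 0, and let a, b ∈ ℝ^N have strictly positive entries. Consider the problem: minimize ∑_{k=0}^{N−1} a_k δ_k over vectors δ ∈ ℝ^N with m·δ̄ ≤ δ_k ≤ M·δ̄ and δ_k > 0 for every k, subject to ∑_{k=0}^{N−1} b_k δ_k^{−r} = (∑_{k=0}^{N−1} b_k)·δ̄^{−r}. Define the vector δ̊ by δ̊_k = δ̄ · ( (∑_{j=0}^{N−1} (b_j a_j^r)^{1/(r+1)}) / (∑_{j=0}^{N−1} b_j) )^{1/r} · (b_k/a_k)^{1/(r+1)}. If m·δ̄ ≤ δ̊_k ≤ M·δ̄ for every k, then δ̊ is an optimal solution of this problem. -/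

import Mathlib

open Real Finset

private lemma rpow_aux1 {r x y : ℝ} (hr : 0 < r) (hx : 0 < x) (hy : 0 < y) :
    x * (y / x) ^ (1 / (r + 1)) = (y * x ^ r) ^ (1 / (r + 1)) := by
  have h1 : 0 < y / x := by positivity
  have h2 : 0 < y * x ^ r := by positivity
  rw [Real.rpow_def_of_pos h1, Real.rpow_def_of_pos h2,
    Real.log_div hy.ne' hx.ne', Real.log_mul hy.ne' (by positivity),
    Real.log_rpow hx]
  nth_rewrite 1 [show x = Real.exp (Real.log x) from (Real.exp_log hx).symm]
  rw [← Real.exp_add]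
  congr 1
  field_simp
  ring

private lemma rpow_aux2 {r x y : ℝ} (hr : 0 < r) (hx : 0 < x) (hy : 0 < y) :
    y * ((y / x) ^ (1 / (r + 1))) ^ (-r) = (y * x ^ r) ^ (1 / (r + 1)) := by
  have h1 : 0 < y / x := by positivity
  have h2 : 0 < y * x ^ r := by positivity
  have h3 : 0 < (y / x) ^ (1 / (r + 1)) := Real.rpow_pos_of_pos h1 _
  rw [Real.rpow_def_of_pos h3, Real.log_rpow h1, Real.rpow_def_of_pos h2,
    Real.log_div hy.ne' hx.ne', Real.log_mul hy.ne' (by positivity),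
    Real.log_rpow hx]
  nth_rewrite 1 [show y = Real.exp (Real.log y) from (Real.exp_log hy).symm]
  rw [← Real.exp_add]
  congr 1
  field_simp
  ring

private lemma rpow_aux3 {r x y d : ℝ} (hr : 0 < r) (hx : 0 < x) (hy : 0 < y) (hd : 0 < d) :
    (y * d ^ (-r)) ^ (1 / (r + 1)) * (x * d) ^ (r / (r + 1)) = (y * x ^ r) ^ (1 / (r + 1)) := by
  have h1 : 0 < y * d ^ (-r) := mul_pos hy (Real.rpow_pos_of_pos hd _)
  have h2 : 0 < x * d := mul_pos hx hd
  have h3 : 0 < y * x ^ r := mul_pos hy (Real.rpow_pos_of_pos hx _)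
  rw [Real.rpow_def_of_pos h1, Real.rpow_def_of_pos h2, Real.rpow_def_of_pos h3,
    Real.log_mul hy.ne' (Real.rpow_pos_of_pos hd _).ne', Real.log_mul hx.ne' hd.ne',
    Real.log_mul hy.ne' (Real.rpow_pos_of_pos hx _).ne', Real.log_rpow hd, Real.log_rpow hx,
    ← Real.exp_add]
  congr 1
  field_simp
  ring

/-- Closed-form optimal schedule for power-type oracle costs (Corollary 3.7). -/
theorem closed_form_power_schedule
    (N : ℕ) (δbar m M r : ℝ)
    (hδbar : 0 < δbar) (hm : 0 ≤ m) (hm1 : m < 1) (hM : 1 < M) (hr : 0 < r)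
    (a b : Fin N → ℝ) (ha : ∀ k, 0 < a k) (hb : ∀ k, 0 < b k)
    (δo : Fin N → ℝ)
    (hδo : ∀ k, δo k = δbar *
      ((∑ j, (b j * a j ^ r) ^ (1 / (r + 1))) / (∑ j, b j)) ^ (1 / r) *
      (b k / a k) ^ (1 / (r + 1)))
    (hbounds : ∀ k, m * δbar ≤ δo k ∧ δo k ≤ M * δbar) :
    -- δo is an optimal solution: it is feasible and minimizes the objective
    (∀ k, 0 < δo k) ∧
    (∑ k, b k * δo k ^ (-r) = (∑ k, b k) * δbar ^ (-r)) ∧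
    (∀ δ : Fin N → ℝ,
      (∀ k, m * δbar ≤ δ k ∧ δ k ≤ M * δbar ∧ 0 < δ k) →
      (∑ k, b k * δ k ^ (-r) = (∑ k, b k) * δbar ^ (-r)) →
      ∑ k, a k * δo k ≤ ∑ k, a k * δ k) := by
  rcases Nat.eq_zero_or_pos N with hN | hN
  · subst hN
    refine ⟨fun k => k.elim0, by simp, fun δ _ _ => by simp⟩
  haveI : Nonempty (Fin N) := ⟨⟨0, hN⟩⟩
  set S : ℝ := ∑ j, (b j * a j ^ r) ^ (1 / (r + 1)) with hS
  set B : ℝ := ∑ j, b j with hB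
  have hr1 : 0 < r + 1 := by linarith
  have hSpos : 0 < S :=
    Finset.sum_pos (fun j _ => Real.rpow_pos_of_pos
      (mul_pos (hb j) (Real.rpow_pos_of_pos (ha j) r)) _) univ_nonempty
  have hBpos : 0 < B := Finset.sum_pos (fun j _ => hb j) univ_nonempty
  have hSB : 0 < S / B := div_pos hSpos hBpos
  set C : ℝ := δbar * (S / B) ^ (1 / r) with hC
  have hCpos : 0 < C := mul_pos hδbar (Real.rpow_pos_of_pos hSB _)
  have hδoC : ∀ k, δo k = C * (b k / a k) ^ (1 / (r + 1)) := hδo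
  have hδopos : ∀ k, 0 < δo k := fun k => by
    rw [hδoC k]
    exact mul_pos hCpos (Real.rpow_pos_of_pos (div_pos (hb k) (ha k)) _)
  -- objective value at δo
  have hobj : ∑ k, a k * δo k = C * S := by
    rw [hS, Finset.mul_sum]
    refine Finset.sum_congr rfl fun k _ => ?_
    rw [hδoC k, show a k * (C * (b k / a k) ^ (1 / (r + 1)))
        = C * (a k * (b k / a k) ^ (1 / (r + 1))) by ring,
      rpow_aux1 hr (ha k) (hb k)]
  -- constraint at δo
  have hfeas : ∑ k, b k * δo k ^ (-r) = B * δbar ^ (-r) := by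
    have h1 : ∀ k, b k * δo k ^ (-r) = C ^ (-r) * (b k * a k ^ r) ^ (1 / (r + 1)) := by
      intro k
      rw [hδoC k, Real.mul_rpow hCpos.le
          (Real.rpow_nonneg (div_pos (hb k) (ha k)).le _),
        show b k * (C ^ (-r) * ((b k / a k) ^ (1 / (r + 1))) ^ (-r))
          = C ^ (-r) * (b k * ((b k / a k) ^ (1 / (r + 1))) ^ (-r)) by ring,
        rpow_aux2 hr (ha k) (hb k)]
    have hCr : C ^ (-r) = δbar ^ (-r) * (B / S) := by
      rw [hC, Real.mul_rpow hδbar.le (Real.rpow_nonneg hSB.le _),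
        ← Real.rpow_mul hSB.le, show 1 / r * (-r) = -1 by field_simp,
        Real.rpow_neg_one, inv_div]
    calc ∑ k, b k * δo k ^ (-r) = ∑ k, C ^ (-r) * (b k * a k ^ r) ^ (1 / (r + 1)) :=
          Finset.sum_congr rfl fun k _ => h1 k
      _ = C ^ (-r) * S := by rw [← Finset.mul_sum, hS]
      _ = δbar ^ (-r) * (B / S) * S := by rw [hCr]
      _ = B * δbar ^ (-r) := by field_simp
  refine ⟨hδopos, hfeas, ?_⟩
  intro δ hδ hcon
  set T : ℝ := ∑ k, a k * δ k with hT
  have hTpos : 0 < T :=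
    Finset.sum_pos (fun k _ => mul_pos (ha k) (hδ k).2.2) univ_nonempty
  -- Hölder
  have hpq : Real.HolderConjugate (r + 1) ((r + 1) / r) := by
    rw [Real.holderConjugate_iff]
    constructor
    · linarith
    · rw [inv_div]
      field_simp
      ring
  have hholder := Real.inner_le_Lp_mul_Lq Finset.univ
    (fun k => (b k * δ k ^ (-r)) ^ (1 / (r + 1)))
    (fun k => (a k * δ k) ^ (r / (r + 1))) hpq
  have hfg : ∀ k : Fin N,
      (b k * δ k ^ (-r)) ^ (1 / (r + 1)) * (a k * δ k) ^ (r / (r + 1))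
        = (b k * a k ^ r) ^ (1 / (r + 1)) :=
    fun k => rpow_aux3 hr (ha k) (hb k) (hδ k).2.2
  have hfp : ∀ k : Fin N,
      |(b k * δ k ^ (-r)) ^ (1 / (r + 1))| ^ (r + 1) = b k * δ k ^ (-r) := by
    intro k
    have h : (0:ℝ) < b k * δ k ^ (-r) :=
      mul_pos (hb k) (Real.rpow_pos_of_pos (hδ k).2.2 _)
    rw [abs_of_nonneg (Real.rpow_nonneg h.le _), ← Real.rpow_mul h.le,
      one_div, inv_mul_cancel₀ hr1.ne', Real.rpow_one]
  have hgq : ∀ k : Fin N,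
      |(a k * δ k) ^ (r / (r + 1))| ^ ((r + 1) / r) = a k * δ k := by
    intro k
    have h : (0:ℝ) < a k * δ k := mul_pos (ha k) (hδ k).2.2
    rw [abs_of_nonneg (Real.rpow_nonneg h.le _), ← Real.rpow_mul h.le,
      show r / (r + 1) * ((r + 1) / r) = 1 by field_simp, Real.rpow_one]
  simp only [hfg, hfp, hgq] at hholder
  rw [hcon, ← hS, ← hT, one_div ((r+1)/r), inv_div] at hholder
  -- hholder : S ≤ (B * δbar ^ (-r)) ^ (1 / (r + 1)) * T ^ (r / (r + 1))
  have hRHSnn : (0:ℝ) ≤ (B * δbar ^ (-r)) ^ (1 / (r + 1)) * T ^ (r / (r + 1)) :=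
    mul_nonneg (Real.rpow_nonneg (mul_pos hBpos (Real.rpow_pos_of_pos hδbar _)).le _)
      (Real.rpow_nonneg hTpos.le _)
  have h2 : S ^ ((r + 1) / r)
      ≤ B ^ (1 / r) * δbar⁻¹ * T := by
    have hBd : (0:ℝ) < B * δbar ^ (-r) := mul_pos hBpos (Real.rpow_pos_of_pos hδbar _)
    have := Real.rpow_le_rpow hSpos.le hholder (by positivity : (0:ℝ) ≤ (r + 1) / r)
    calc S ^ ((r + 1) / r)
        ≤ ((B * δbar ^ (-r)) ^ (1 / (r + 1)) * T ^ (r / (r + 1))) ^ ((r + 1) / r) := this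
      _ = B ^ (1 / r) * δbar⁻¹ * T := by
          rw [Real.mul_rpow (Real.rpow_nonneg hBd.le _) (Real.rpow_nonneg hTpos.le _),
            ← Real.rpow_mul hBd.le, ← Real.rpow_mul hTpos.le,
            show 1 / (r + 1) * ((r + 1) / r) = 1 / r by field_simp,
            show r / (r + 1) * ((r + 1) / r) = 1 by field_simp, Real.rpow_one,
            Real.mul_rpow hBpos.le (Real.rpow_nonneg hδbar.le _),
            ← Real.rpow_mul hδbar.le, show -r * (1 / r) = -1 by field_simp,
            Real.rpow_neg_one]
  have hSrr : S ^ ((r + 1) / r) = S ^ (1 / r) * S := by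
    rw [show (r + 1) / r = 1 / r + 1 by field_simp; ring, Real.rpow_add hSpos,
      Real.rpow_one]
  have hB1r : (0:ℝ) < B ^ (1 / r) := Real.rpow_pos_of_pos hBpos _
  rw [hobj, hC, Real.div_rpow hSpos.le hBpos.le,
    show δbar * (S ^ (1 / r) / B ^ (1 / r)) * S = S ^ (1 / r) * S * δbar / B ^ (1 / r) by
      ring,
    div_le_iff₀ hB1r]
  rw [hSrr] at h2
  have h3 := mul_le_mul_of_nonneg_right h2 hδbar.le
  calc S ^ (
      1 / r) * S * δbar ≤ B ^ (1 / r) * δbar⁻¹ * T * δbar := h3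
    _ = T * B ^ (1 / r) := by field_simp
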